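/- SO₂(G) = m·(Δ² − δ²)/(Δ² + δ²) holds if and only if max{d(u),d(v)}/min{d(u),d(v)} = Δ/δ for every edge uv ∈ E(G). -/
import Mathlib


open Finset

variable {V : Type*}

/-- The second Sombor index of a simple graph. -/
noncomputable def SO2 [Fintype V] [DecidableEq V] (G : SimpleGraph V) [DecidableRel G.Adj] : ℝ :=
  ∑ e ∈ G.edgeFinset,
    Sym2.lift ⟨fun u v =>
        |((G.degree u : ℝ)^2 - (G.degree v : ℝ)^2)| / ((G.degree u : ℝ)^2 + (G.degree v : ℝ)^2),
      fun u v => by simp only []; rw [abs_sub_comm, add_comm]⟩ e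

/-- `mij G i j` is the number of edges whose endpoint degrees are `i` and `j`. -/
def mij [Fintype V] [DecidableEq V] (G : SimpleGraph V) [DecidableRel G.Adj] (i j : ℕ) : ℕ :=
  (G.edgeFinset.filter (fun e => Sym2.map (fun v => G.degree v) e = s(i, j))).card

/-- `nd G i` is the number of vertices of degree `i`. -/
def nd [Fintype V] [DecidableEq V] (G : SimpleGraph V) [DecidableRel G.Adj] (i : ℕ) : ℕ :=
  (Finset.univ.filter (fun v => G.degree v = i)).card

lemma auxreal (a b D d : ℝ) (hb : 0 < b) (hdp : 0 < d) (hba : b ≤ a) (haD : a ≤ D) (hdb : d ≤ b) :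
    (a^2 - b^2)/(a^2+b^2) ≤ (D^2 - d^2)/(D^2+d^2) ∧
    ((a^2 - b^2)/(a^2+b^2) = (D^2 - d^2)/(D^2+d^2) ↔ a*d = D*b) := by
  have ha : 0 < a := hb.trans_le hba
  have hD : 0 < D := ha.trans_le haD
  have h1 : (0:ℝ) < a^2 + b^2 := by positivity
  have h2 : (0:ℝ) < D^2 + d^2 := by positivity
  have had : 0 < a*d := mul_pos ha hdp
  have hDb : 0 < D*b := mul_pos hD hb
  constructor
  · rw [div_le_div_iff₀ h1 h2]
    nlinarith [mul_le_mul haD hdb hdp.le hD.le]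
  · rw [div_eq_div_iff h1.ne' h2.ne']
    constructor
    · intro h
      have hsq : (a*d)*(a*d) = (D*b)*(D*b) := by nlinarith
      exact (mul_self_inj had.le hDb.le).mp hsq
    · intro h; nlinarith

lemma edge_key [Fintype V] [DecidableEq V] (G : SimpleGraph V) [DecidableRel G.Adj]
    (hd : 1 ≤ G.minDegree) {u v : V} (huv : G.Adj u v) :
    |((G.degree u : ℝ)^2 - (G.degree v : ℝ)^2)| / ((G.degree u : ℝ)^2 + (G.degree v : ℝ)^2) ≤
      ((G.maxDegree : ℝ)^2 - (G.minDegree : ℝ)^2) / ((G.maxDegree : ℝ)^2 + (G.minDegree : ℝ)^2) ∧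
    (|((G.degree u : ℝ)^2 - (G.degree v : ℝ)^2)| / ((G.degree u : ℝ)^2 + (G.degree v : ℝ)^2) =
      ((G.maxDegree : ℝ)^2 - (G.minDegree : ℝ)^2) / ((G.maxDegree : ℝ)^2 + (G.minDegree : ℝ)^2)
      ↔ (max (G.degree u) (G.degree v) : ℝ) / (min (G.degree u) (G.degree v) : ℝ)
          = (G.maxDegree : ℝ) / (G.minDegree : ℝ)) := by
  set a : ℕ := max (G.degree u) (G.degree v) with ha
  set b : ℕ := min (G.degree u) (G.degree v) with hb
  have hdu : G.minDegree ≤ G.degree u := G.minDegree_le_degree u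
  have hdv : G.minDegree ≤ G.degree v := G.minDegree_le_degree v
  have hbpos : (0:ℝ) < b := by
    have : 1 ≤ b := le_min (hd.trans hdu) (hd.trans hdv)
    exact_mod_cast Nat.lt_of_lt_of_le Nat.zero_lt_one this
  have hdpos : (0:ℝ) < G.minDegree := by exact_mod_cast hd
  have hba : (b:ℝ) ≤ a := by exact_mod_cast min_le_max
  have haD : (a:ℝ) ≤ G.maxDegree := by
    have : a ≤ G.maxDegree := max_le (G.degree_le_maxDegree u) (G.degree_le_maxDegree v)
    exact_mod_cast this
  have hdb : (G.minDegree:ℝ) ≤ b := by exact_mod_cast le_min hdu hdv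
  have habs : |((G.degree u : ℝ)^2 - (G.degree v : ℝ)^2)| = (a:ℝ)^2 - (b:ℝ)^2 := by
    rcases le_total (G.degree v) (G.degree u) with h | h
    · rw [ha, hb, max_eq_left h, min_eq_right h, abs_of_nonneg]
      have : (G.degree v : ℝ) ≤ G.degree u := by exact_mod_cast h
      nlinarith
    · rw [ha, hb, max_eq_right h, min_eq_left h, abs_of_nonpos]
      · ring
      · have : (G.degree u : ℝ) ≤ G.degree v := by exact_mod_cast h
        nlinarith
  have hsum : ((G.degree u : ℝ)^2 + (G.degree v : ℝ)^2) = (a:ℝ)^2 + (b:ℝ)^2 := by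
    rcases le_total (G.degree v) (G.degree u) with h | h
    · rw [ha, hb, max_eq_left h, min_eq_right h]
    · rw [ha, hb, max_eq_right h, min_eq_left h]; ring
  rw [habs, hsum]
  obtain ⟨h1, h2⟩ := auxreal (a:ℝ) (b:ℝ) (G.maxDegree:ℝ) (G.minDegree:ℝ)
    hbpos hdpos hba haD hdb
  refine ⟨h1, h2.trans ?_⟩
  rw [← Nat.cast_max, ← Nat.cast_min, ← ha, ← hb, div_eq_div_iff hbpos.ne' hdpos.ne']

theorem stmt2 [Fintype V] [DecidableEq V] (G : SimpleGraph V) [DecidableRel G.Adj]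
    (hd : 1 ≤ G.minDegree) :
    SO2 G = (G.edgeFinset.card : ℝ) *
        ((G.maxDegree : ℝ)^2 - (G.minDegree : ℝ)^2) / ((G.maxDegree : ℝ)^2 + (G.minDegree : ℝ)^2)
      ↔ ∀ u v : V, G.Adj u v →
        (max (G.degree u) (G.degree v) : ℝ) / (min (G.degree u) (G.degree v) : ℝ)
          = (G.maxDegree : ℝ) / (G.minDegree : ℝ) := by
  set C : ℝ := ((G.maxDegree : ℝ)^2 - (G.minDegree : ℝ)^2) /
    ((G.maxDegree : ℝ)^2 + (G.minDegree : ℝ)^2) with hC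
  have hrhs : (G.edgeFinset.card : ℝ) *
      ((G.maxDegree : ℝ)^2 - (G.minDegree : ℝ)^2) / ((G.maxDegree : ℝ)^2 + (G.minDegree : ℝ)^2)
      = ∑ _e ∈ G.edgeFinset, C := by
    rw [Finset.sum_const, nsmul_eq_mul, hC, mul_div_assoc]
  have hle : ∀ e ∈ G.edgeFinset,
      Sym2.lift ⟨fun u v =>
        |((G.degree u : ℝ)^2 - (G.degree v : ℝ)^2)| / ((G.degree u : ℝ)^2 + (G.degree v : ℝ)^2),
      fun u v => by simp only []; rw [abs_sub_comm, add_comm]⟩ e ≤ C := by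
    intro e
    induction e using Sym2.ind with
    | _ u v =>
      intro he
      have huv : G.Adj u v := (SimpleGraph.mem_edgeFinset.mp he)
      simpa using (edge_key G hd huv).1
  rw [SO2, hrhs, Finset.sum_eq_sum_iff_of_le hle]
  constructor
  · intro h u v huv
    have he : s(u, v) ∈ G.edgeFinset := SimpleGraph.mem_edgeFinset.mpr huv
    have := h _ he
    simp only [Sym2.lift_mk] at this
    exact (edge_key G hd huv).2.mp this
  · intro h e
    induction e using Sym2.ind with
    | _ u v =>
      intro he
      have huv : G.Adj u v := SimpleGraph.mem_edgeFinset.mp he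
      simp only [Sym2.lift_mk]
      exact (edge_key G hd huv).2.mpr (h u v huv)
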